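/- Claim 1 (uniform negative definiteness of the last auxiliary bound): Let Δ, μ > 0, let j ≥ 1 be an integer, and let Y_i : ℝⁿ × ℝ^m → ℝ (i = 1,…,j) be continuous functions satisfying: for each k ∈ {1,…,j}, whenever (z,ψ) ∈ B(Δ) × B(μ) and Y_i(z,ψ) = 0 for all i ∈ {1,…,k−1}, then Y_k(z,ψ) ≤ 0; and whenever (z,ψ) ∈ B(Δ) × B(μ) and Y_i(z,ψ) = 0 for all i ∈ {1,…,j}, then z = 0. Then for each δ ∈ (0,Δ] there exists ε > 0 such that every (z,ψ) ∈ H(δ,Δ) × B(μ) with Y_i(z,ψ) = 0 for all i ∈ {1,…,j−1} satisfies Y_j(z,ψ) ≤ −ε. -/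
import Mathlib


noncomputable section

/-- **Claim 1**: uniform negative definiteness of the last auxiliary bound on the
annulus `H(δ,Δ) × B(μ)`. Indices are zero-based: `Y ⟨0⟩,…,Y ⟨j-1⟩` correspond to
`Y₁,…,Y_j`. -/
theorem claim1 (n m j : ℕ) (hj : 1 ≤ j) (Δ μ : ℝ) (hΔ : 0 < Δ) (hμ : 0 < μ)
    (Y : Fin j → (Fin n → ℝ) → (Fin m → ℝ) → ℝ)
    (hYcont : ∀ i, Continuous fun q : (Fin n → ℝ) × (Fin m → ℝ) => Y i q.1 q.2)
    -- Assumption 3: nested sign condition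
    (h3 : ∀ k : Fin j, ∀ (z : Fin n → ℝ) (ψ : Fin m → ℝ), ‖z‖ ≤ Δ → ‖ψ‖ ≤ μ →
      (∀ i, i < k → Y i z ψ = 0) → Y k z ψ ≤ 0)
    -- Assumption 4: joint definiteness
    (h4 : ∀ (z : Fin n → ℝ) (ψ : Fin m → ℝ), ‖z‖ ≤ Δ → ‖ψ‖ ≤ μ →
      (∀ i, Y i z ψ = 0) → z = 0) :
    ∀ δ : ℝ, 0 < δ → δ ≤ Δ → ∃ ε : ℝ, 0 < ε ∧
      ∀ (z : Fin n → ℝ) (ψ : Fin m → ℝ), δ ≤ ‖z‖ → ‖z‖ ≤ Δ → ‖ψ‖ ≤ μ →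
        (∀ i : Fin j, i.val + 1 < j → Y i z ψ = 0) →
        Y ⟨j - 1, by omega⟩ z ψ ≤ -ε := by
  intro δ hδ hδΔ
  set jl : Fin j := ⟨j - 1, by omega⟩ with hjl
  set K : Set ((Fin n → ℝ) × (Fin m → ℝ)) :=
    {q | δ ≤ ‖q.1‖ ∧ ‖q.1‖ ≤ Δ ∧ ‖q.2‖ ≤ μ ∧
      ∀ i : Fin j, i.val + 1 < j → Y i q.1 q.2 = 0} with hK
  have hKclosed : IsClosed K := by
    have h1 : IsClosed {q : (Fin n → ℝ) × (Fin m → ℝ) | δ ≤ ‖q.1‖} :=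
      isClosed_le continuous_const continuous_fst.norm
    have h2 : IsClosed {q : (Fin n → ℝ) × (Fin m → ℝ) | ‖q.1‖ ≤ Δ} :=
      isClosed_le continuous_fst.norm continuous_const
    have h3' : IsClosed {q : (Fin n → ℝ) × (Fin m → ℝ) | ‖q.2‖ ≤ μ} :=
      isClosed_le continuous_snd.norm continuous_const
    have h4' : IsClosed {q : (Fin n → ℝ) × (Fin m → ℝ) |
        ∀ i : Fin j, i.val + 1 < j → Y i q.1 q.2 = 0} := by
      have heq : {q : (Fin n → ℝ) × (Fin m → ℝ) |
          ∀ i : Fin j, i.val + 1 < j → Y i q.1 q.2 = 0}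
          = ⋂ i : Fin j, {q | i.val + 1 < j → Y i q.1 q.2 = 0} := by
        ext q; simp
      rw [heq]
      refine isClosed_iInter fun i => ?_
      by_cases h : i.val + 1 < j
      · simpa [h] using isClosed_eq (hYcont i) continuous_const
      · simp [h]
    have : K = ({q : (Fin n → ℝ) × (Fin m → ℝ) | δ ≤ ‖q.1‖} ∩
        ({q | ‖q.1‖ ≤ Δ} ∩ ({q | ‖q.2‖ ≤ μ} ∩
        {q | ∀ i : Fin j, i.val + 1 < j → Y i q.1 q.2 = 0}))) := by
      ext q; simp [hK, Set.mem_setOf_eq, and_assoc]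
    rw [this]
    exact h1.inter (h2.inter (h3'.inter h4'))
  have hKcompact : IsCompact K := by
    refine IsCompact.of_isClosed_subset
      ((isCompact_closedBall (0 : Fin n → ℝ) Δ).prod
        (isCompact_closedBall (0 : Fin m → ℝ) μ)) hKclosed ?_
    rintro ⟨z, ψ⟩ ⟨_, hz2, hψ, _⟩
    exact ⟨mem_closedBall_zero_iff.2 hz2, mem_closedBall_zero_iff.2 hψ⟩
  by_cases hKne : K.Nonempty
  · obtain ⟨q0, hq0K, hq0max⟩ :=
      hKcompact.exists_isMaxOn hKne (hYcont jl).continuousOn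
    have hq0 := hq0K
    obtain ⟨hq1, hq2, hq3, hq4⟩ : δ ≤ ‖q0.1‖ ∧ ‖q0.1‖ ≤ Δ ∧ ‖q0.2‖ ≤ μ ∧
        ∀ i : Fin j, i.val + 1 < j → Y i q0.1 q0.2 = 0 := hq0
    have hMle : Y jl q0.1 q0.2 ≤ 0 := by
      refine h3 jl q0.1 q0.2 hq2 hq3 fun i hi => hq4 i ?_
      have := hi
      simp only [Fin.lt_def, hjl] at this
      omega
    have hMne : Y jl q0.1 q0.2 ≠ 0 := by
      intro h0
      have hall : ∀ i : Fin j, Y i q0.1 q0.2 = 0 := by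
        intro i
        by_cases hi : i.val + 1 < j
        · exact hq4 i hi
        · have : i = jl := by
            apply Fin.ext
            simp only [hjl]
            omega
          rw [this]; exact h0
      have hz0 := h4 q0.1 q0.2 hq2 hq3 hall
      rw [hz0] at hq1
      simp at hq1
      linarith
    have hMlt : Y jl q0.1 q0.2 < 0 := lt_of_le_of_ne hMle hMne
    refine ⟨-(Y jl q0.1 q0.2), by linarith, ?_⟩
    intro z ψ hz1 hz2 hψ hzero
    have hmem : (z, ψ) ∈ K := ⟨hz1, hz2, hψ, hzero⟩
    have := hq0max hmem
    simpa using this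
  · refine ⟨1, one_pos, ?_⟩
    intro z ψ hz1 hz2 hψ hzero
    exact absurd ⟨hz1, hz2, hψ, hzero⟩ (fun h => hKne ⟨(z, ψ), h⟩)
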